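/- Let H be a Heisenberg group (a group whose commutator subgroup [H,H] is contained in its centre Z(H)) such that the centre Z(H) has finite index in H, and let χ : Z(H) → ℂˣ be a character with ker(χ) ∩ [H,H] = {1}. Then for every group homomorphism φ : H → ℂˣ that is trivial on Z(H), there exists an element x ∈ H such that φ(h) = χ([h,x]) for every h ∈ H. -/

import Mathlib

open scoped commutatorElement

section Aux

variable {H : Type*} [Group H]

private lemma heis_comm_central (hHeis : commutator H ≤ Subgroup.center H) (a b : H) :
    ⁅a, b⁆ ∈ Subgroup.center H :=
  hHeis (Subgroup.commutator_mem_commutator (Subgroup.mem_top a) (Subgroup.mem_top b))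

private lemma heis_comm_mul_left (hHeis : commutator H ≤ Subgroup.center H) (a b c : H) :
    ⁅a * b, c⁆ = ⁅a, c⁆ * ⁅b, c⁆ := by
  have h1 : ⁅a * b, c⁆ = a * ⁅b, c⁆ * a⁻¹ * ⁅a, c⁆ := by
    simp only [commutatorElement_def]; group
  have h2 := (Subgroup.mem_center_iff.mp (heis_comm_central hHeis b c)) a⁻¹
  have h3 := (Subgroup.mem_center_iff.mp (heis_comm_central hHeis b c)) ⁅a, c⁆
  calc ⁅a * b, c⁆ = a * ⁅b, c⁆ * a⁻¹ * ⁅a, c⁆ := h1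
    _ = a * (⁅b, c⁆ * a⁻¹) * ⁅a, c⁆ := by group
    _ = a * (a⁻¹ * ⁅b, c⁆) * ⁅a, c⁆ := by rw [← h2]
    _ = ⁅b, c⁆ * ⁅a, c⁆ := by group
    _ = ⁅a, c⁆ * ⁅b, c⁆ := h3.symm

private lemma heis_comm_mul_right (hHeis : commutator H ≤ Subgroup.center H) (a b c : H) :
    ⁅a, b * c⁆ = ⁅a, b⁆ * ⁅a, c⁆ := by
  have h0 : ⁅b * c, a⁆ = ⁅b, a⁆ * ⁅c, a⁆ := heis_comm_mul_left hHeis b c a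
  have h := congrArg (·⁻¹) h0
  simp only [commutatorElement_inv, mul_inv_rev] at h
  rw [h]
  exact ((Subgroup.mem_center_iff.mp (heis_comm_central hHeis a c)) ⁅a, b⁆).symm

end Aux

/-- In a Heisenberg group `H` with finite central quotient and a central character `χ`
with `ker χ ∩ [H,H] = 1`, every character of `H` trivial on the centre is of the form
`h ↦ χ ⁅h, x⁆` for some `x ∈ H`. -/
theorem character_of_central_quotient_is_commutator_pairing
    (H : Type*) [Group H]
    (hHeis : commutator H ≤ Subgroup.center H)
    (hfin : (Subgroup.center H).FiniteIndex)
    (χ : Subgroup.center H →* ℂˣ)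
    (hker : ∀ h ∈ commutator H, ∀ hz : h ∈ Subgroup.center H, χ ⟨h, hz⟩ = 1 → h = 1)
    (φ : H →* ℂˣ) (hφ : ∀ z ∈ Subgroup.center H, φ z = 1) :
    ∃ x : H, ∀ h : H, ∀ hc : ⁅h, x⁆ ∈ Subgroup.center H, φ h = χ ⟨⁅h, x⁆, hc⟩ := by
  classical
  -- the quotient is a finite commutative group
  letI : CommGroup (H ⧸ Subgroup.center H) :=
    { (inferInstance : Group (H ⧸ Subgroup.center H)) with
      mul_comm := by
        intro a b
        induction a using QuotientGroup.induction_on with | H a =>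
        induction b using QuotientGroup.induction_on with | H b =>
        rw [← QuotientGroup.mk_mul, ← QuotientGroup.mk_mul]
        refine QuotientGroup.eq.mpr ?_
        have : (a * b)⁻¹ * (b * a) = ⁅b⁻¹, a⁻¹⁆ := by
          simp only [commutatorElement_def]; group
        rw [this]
        exact heis_comm_central hHeis _ _ }
  haveI : Finite (H ⧸ Subgroup.center H) := Nat.finite_of_card_ne_zero hfin.index_ne_zero
  have hcen : ∀ a b : H, ⁅a, b⁆ ∈ Subgroup.center H := fun a b => heis_comm_central hHeis a b
  -- for each `x`, the map `h ↦ χ ⁅h, x⁆` is a character of `H` trivial on the centre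
  let ψ : H → (H →* ℂˣ) := fun x =>
    { toFun := fun h => χ ⟨⁅h, x⁆, hcen h x⟩
      map_one' := by
        show χ ⟨⁅(1 : H), x⁆, hcen 1 x⟩ = 1
        have h1 : (⟨⁅(1 : H), x⁆, hcen 1 x⟩ : Subgroup.center H) = 1 := by ext; simp
        rw [h1, map_one]
      map_mul' := by
        intro a b
        show χ ⟨⁅a * b, x⁆, hcen _ x⟩ = χ ⟨⁅a, x⁆, hcen a x⟩ * χ ⟨⁅b, x⁆, hcen b x⟩
        have h1 : (⟨⁅a * b, x⁆, hcen _ x⟩ : Subgroup.center H)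
            = ⟨⁅a, x⁆, hcen a x⟩ * ⟨⁅b, x⁆, hcen b x⟩ := by
          ext; exact heis_comm_mul_left hHeis a b x
        rw [h1, map_mul] }
  have hψtriv : ∀ x : H, ∀ z ∈ Subgroup.center H, ψ x z = 1 := by
    intro x z hz
    show χ ⟨⁅z, x⁆, hcen z x⟩ = 1
    have h1 : (⟨⁅z, x⁆, hcen z x⟩ : Subgroup.center H) = 1 := by
      ext
      exact commutatorElement_eq_one_iff_mul_comm.mpr (Subgroup.mem_center_iff.mp hz x).symm
    rw [h1, map_one]
  let ψ' : H → ((H ⧸ Subgroup.center H) →* ℂˣ) := fun x =>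
    QuotientGroup.lift (Subgroup.center H) (ψ x) (hψtriv x)
  -- assemble into a homomorphism `Φ`
  let Φ : H →* ((H ⧸ Subgroup.center H) →* ℂˣ) :=
    { toFun := ψ'
      map_one' := by
        refine MonoidHom.ext fun a => ?_
        induction a using QuotientGroup.induction_on with | H a =>
        show χ ⟨⁅a, (1 : H)⁆, hcen a 1⟩ = 1
        have h1 : (⟨⁅a, (1 : H)⁆, hcen a 1⟩ : Subgroup.center H) = 1 := by ext; simp
        rw [h1, map_one]
      map_mul' := by
        intro x y
        refine MonoidHom.ext fun a => ?_
        induction a using QuotientGroup.induction_on with | H a =>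
        show χ ⟨⁅a, x * y⁆, hcen a (x * y)⟩ = χ ⟨⁅a, x⁆, hcen a x⟩ * χ ⟨⁅a, y⁆, hcen a y⟩
        have h1 : (⟨⁅a, x * y⁆, hcen a (x * y)⟩ : Subgroup.center H)
            = ⟨⁅a, x⁆, hcen a x⟩ * ⟨⁅a, y⁆, hcen a y⟩ := by
          ext; exact heis_comm_mul_right hHeis a x y
        rw [h1, map_mul] }
  have hΦtriv : ∀ z ∈ Subgroup.center H, Φ z = 1 := by
    intro z hz
    refine MonoidHom.ext fun a => ?_
    induction a using QuotientGroup.induction_on with | H a =>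
    show χ ⟨⁅a, z⁆, hcen a z⟩ = 1
    have h1 : (⟨⁅a, z⁆, hcen a z⟩ : Subgroup.center H) = 1 := by
      ext
      exact commutatorElement_eq_one_iff_mul_comm.mpr (Subgroup.mem_center_iff.mp hz a)
    rw [h1, map_one]
  let Φ' : (H ⧸ Subgroup.center H) →* ((H ⧸ Subgroup.center H) →* ℂˣ) :=
    QuotientGroup.lift (Subgroup.center H) Φ hΦtriv
  -- `Φ'` is injective by nondegeneracy of the pairing
  have hinj : Function.Injective Φ' := by
    rw [injective_iff_map_eq_one]
    intro a ha
    induction a using QuotientGroup.induction_on with | H x =>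
    rw [QuotientGroup.eq_one_iff, Subgroup.mem_center_iff]
    intro h
    have hone : ⁅h, x⁆ = 1 := by
      have hχ : χ ⟨⁅h, x⁆, hcen h x⟩ = 1 := congrArg (fun f => f ((h : H) : H ⧸ Subgroup.center H)) ha
      exact hker _ (Subgroup.commutator_mem_commutator (Subgroup.mem_top h)
        (Subgroup.mem_top x)) (hcen h x) hχ
    exact commutatorElement_eq_one_iff_mul_comm.mp hone
  -- duality: the dual group has the same cardinality
  haveI : NeZero ((Monoid.exponent (H ⧸ Subgroup.center H) : ℂ)) :=
    ⟨by exact_mod_cast Monoid.exponent_ne_zero_of_finite⟩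
  obtain ⟨e⟩ := CommGroup.monoidHom_mulEquiv_of_hasEnoughRootsOfUnity (H ⧸ Subgroup.center H) ℂ
  haveI : Finite ((H ⧸ Subgroup.center H) →* ℂˣ) := Finite.of_equiv _ e.symm.toEquiv
  have hcard : Nat.card (H ⧸ Subgroup.center H) = Nat.card ((H ⧸ Subgroup.center H) →* ℂˣ) :=
    (Nat.card_congr e.toEquiv).symm
  have hsurj : Function.Surjective Φ' :=
    ((Nat.bijective_iff_injective_and_card Φ').mpr ⟨hinj, hcard⟩).2
  -- descend `φ` and conclude
  obtain ⟨xb, hxb⟩ := hsurj (QuotientGroup.lift (Subgroup.center H) φ hφ)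
  obtain ⟨x, rfl⟩ := QuotientGroup.mk_surjective xb
  refine ⟨x, fun h hc => ?_⟩
  have h2 : χ ⟨⁅h, x⁆, hcen h x⟩ = φ h :=
    congrArg (fun f => f ((h : H) : H ⧸ Subgroup.center H)) hxb
  exact h2.symm
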